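/- Let X be strictly positive with E[X] = 1, independent of L, where L has continuous strictly increasing CDF F_L, and L, X·L are integrable. With q = F_L^{-1}(1−α) and S(q) = q·(X−1) − X·L, one has E[S(q)·1_{S(q) ≤ −q}] = E[−L·1_{L ≥ q}]. Consequently ES_α[S(q)] = ES_α[−L], where ES_α[Y] := −α^{-1}·E[Y·1_{Y ≤ z_α}] with z_α the α-quantile of Y. -/

import Mathlib

open MeasureTheory ProbabilityTheory

/-- With `X > 0` a.s., `E[X] = 1`, `X ⊥ L`, `L` with continuous strictly
increasing CDF, `L` and `X·L` integrable, `q = F_L⁻¹(1−α)` and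
`S(q) = q(X−1) − X·L`, one has `E[S(q)·1_{S(q) ≤ −q}] = E[−L·1_{L ≥ q}]`;
consequently `ES_α[S(q)] = ES_α[−L]`. -/
theorem stmt2 {Ω : Type*} [MeasurableSpace Ω] (μ : Measure Ω) [IsProbabilityMeasure μ]
    (X L : Ω → ℝ) (hX : Measurable X) (hL : Measurable L)
    (hXpos : ∀ᵐ ω ∂μ, 0 < X ω) (hindep : IndepFun X L μ)
    (hXint : Integrable X μ) (hXmean : ∫ ω, X ω ∂μ = 1)
    (hLint : Integrable L μ) (hXLint : Integrable (fun ω => X ω * L ω) μ)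
    (FL : ℝ → ℝ) (hFL : ∀ x, FL x = (μ {ω | L ω ≤ x}).toReal)
    (hFLcont : Continuous FL) (hFLmono : StrictMono FL)
    (α : ℝ) (hα : α ∈ Set.Ioo (0:ℝ) 1)
    (q : ℝ) (hq : FL q = 1 - α) :
    (∫ ω in {ω | q * (X ω - 1) - X ω * L ω ≤ -q},
        (q * (X ω - 1) - X ω * L ω) ∂μ) = ∫ ω in {ω | q ≤ L ω}, (-L ω) ∂μ ∧
    -(α⁻¹ * ∫ ω in {ω | q * (X ω - 1) - X ω * L ω ≤ -q},
        (q * (X ω - 1) - X ω * L ω) ∂μ) = -(α⁻¹ * ∫ ω in {ω | q ≤ L ω}, (-L ω) ∂μ) := by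
  set A : Set Ω := {ω | q ≤ L ω} with hAdef
  have hA : MeasurableSet A := measurableSet_le measurable_const hL
  -- the two events agree a.e.
  have hsets : {ω | q * (X ω - 1) - X ω * L ω ≤ -q} =ᵐ[μ] A := by
    filter_upwards [hXpos] with ω hω
    simp only [Set.mem_setOf_eq, eq_iff_iff, hAdef]
    constructor
    · intro h
      replace h : q * (X ω - 1) - X ω * L ω ≤ -q := h
      have h2 : X ω * (q - L ω) ≤ X ω * 0 := by nlinarith
      have := (mul_le_mul_iff_right₀ hω).mp h2
      show q ≤ L ω
      linarith
    · intro h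
      replace h : q ≤ L ω := h
      show q * (X ω - 1) - X ω * L ω ≤ -q
      nlinarith [mul_nonneg hω.le (sub_nonneg.mpr h)]
  have hcong : (∫ ω in {ω | q * (X ω - 1) - X ω * L ω ≤ -q},
      (q * (X ω - 1) - X ω * L ω) ∂μ) = ∫ ω in A, (q * (X ω - 1) - X ω * L ω) ∂μ :=
    setIntegral_congr_set hsets
  -- indicator of {x | q ≤ x}
  have hind1 : IndepFun X (fun ω => (Set.Ici q).indicator (fun _ => (1:ℝ)) (L ω)) μ := by
    have := hindep.comp measurable_id
      ((measurable_const.indicator measurableSet_Ici) :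
        Measurable ((Set.Ici q).indicator (fun _ => (1:ℝ))))
    exact this
  have hind2 : IndepFun X (fun ω => (Set.Ici q).indicator id (L ω)) μ := by
    have := hindep.comp measurable_id
      ((measurable_id.indicator measurableSet_Ici) :
        Measurable ((Set.Ici q).indicator id))
    exact this
  have heq1 : (fun ω => (Set.Ici q).indicator (fun _ => (1:ℝ)) (L ω)) = A.indicator (fun _ => (1:ℝ)) := by
    funext ω
    by_cases h : q ≤ L ω <;> simp [Set.indicator_apply, Set.mem_Ici, hAdef, h]
  have heq2 : (fun ω => (Set.Ici q).indicator id (L ω)) = A.indicator L := by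
    funext ω
    by_cases h : q ≤ L ω <;> simp [Set.indicator_apply, Set.mem_Ici, hAdef, h]
  have hint1 : Integrable (fun ω => (Set.Ici q).indicator (fun _ => (1:ℝ)) (L ω)) μ := by
    rw [heq1]; exact (integrable_const 1).indicator hA
  have hint2 : Integrable (fun ω => (Set.Ici q).indicator id (L ω)) μ := by
    rw [heq2]; exact hLint.indicator hA
  -- ∫_A X = μ(A)
  have hXA : ∫ ω in A, X ω ∂μ = (μ A).toReal := by
    have hmul := hind1.integral_mul_eq_mul_integral hXint.aestronglyMeasurable hint1.aestronglyMeasurable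
    have hprod : (X * fun ω => (Set.Ici q).indicator (fun _ => (1:ℝ)) (L ω)) = A.indicator X := by
      funext ω
      by_cases h : q ≤ L ω <;> simp [Set.indicator_apply, Set.mem_Ici, hAdef, h]
    rw [hprod, integral_indicator hA] at hmul
    rw [hmul, hXmean, heq1, integral_indicator hA, one_mul]
    simp [Measure.real]
  -- ∫_A X·L = ∫_A L
  have hXLA : ∫ ω in A, X ω * L ω ∂μ = ∫ ω in A, L ω ∂μ := by
    have hmul := hind2.integral_mul_eq_mul_integral hXint.aestronglyMeasurable hint2.aestronglyMeasurable
    have hprod : (X * fun ω => (Set.Ici q).indicator id (L ω)) = A.indicator (fun ω => X ω * L ω) := by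
      funext ω
      by_cases h : q ≤ L ω <;> simp [Set.indicator_apply, Set.mem_Ici, hAdef, h]
    rw [hprod, integral_indicator hA] at hmul
    rw [hmul, hXmean, heq2, integral_indicator hA, one_mul]
  have h1A : ∫ _ω in A, (1:ℝ) ∂μ = (μ A).toReal := by
    simp [setIntegral_const, Measure.real]
  have hsplit : ∫ ω in A, (q * (X ω - 1) - X ω * L ω) ∂μ
      = q * ((∫ ω in A, X ω ∂μ) - ∫ _ω in A, (1:ℝ) ∂μ) - ∫ ω in A, X ω * L ω ∂μ := by
    have hf : Integrable (fun ω => q * (X ω - 1)) μ := by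
      have h0 : Integrable (fun ω => X ω - 1) μ := hXint.sub (integrable_const 1)
      exact h0.const_mul q
    rw [integral_sub hf.restrict hXLint.restrict]
    congr 1
    rw [← integral_sub hXint.restrict ((integrable_const 1).restrict), ← integral_const_mul]
  have hmain : ∫ ω in A, (q * (X ω - 1) - X ω * L ω) ∂μ = ∫ ω in A, (-L ω) ∂μ := by
    rw [hsplit, hXA, h1A, hXLA, integral_neg]
    ring
  refine ⟨hcong.trans hmain, ?_⟩
  rw [hcong, hmain]
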